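/- Let d be a natural number and m ≥ 2, and let c : Fin m → EuclideanSpace ℝ (Fin d) be injective. Consider the set of comparison patterns { p : Fin m → Fin m → Prop | there exists x ∈ EuclideanSpace ℝ (Fin d) such that ‖x − c i‖ ≠ ‖x − c j‖ for all i ≠ j, and p i j ↔ ‖x − c i‖ < ‖x − c j‖ for all i, j }. This set is finite and has at most (d+1) · (m(m−1))^d elements. -/

import Mathlib

/-- Lemma 4.3 (explicit bound): the strict distance-comparison patterns realized by tie-free
points in `ℝ^d` with respect to `m ≥ 2` pairwise-distinct candidate positions number at most
`(d+1) · (m(m-1))^d`. -/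
theorem comparison_patterns_finite_card_le_explicit
    (d m : ℕ) (hm : 2 ≤ m) (c : Fin m → EuclideanSpace ℝ (Fin d)) (hc : Function.Injective c) :
    ({p : Fin m → Fin m → Prop | ∃ x : EuclideanSpace ℝ (Fin d),
        (∀ i j : Fin m, i ≠ j → ‖x - c i‖ ≠ ‖x - c j‖) ∧
        (∀ i j : Fin m, p i j ↔ ‖x - c i‖ < ‖x - c j‖)}).Finite ∧
    ({p : Fin m → Fin m → Prop | ∃ x : EuclideanSpace ℝ (Fin d),
        (∀ i j : Fin m, i ≠ j → ‖x - c i‖ ≠ ‖x - c j‖) ∧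
        (∀ i j : Fin m, p i j ↔ ‖x - c i‖ < ‖x - c j‖)}).ncard
      ≤ (d + 1) * (m * (m - 1)) ^ d := by
  classical
  set P : Set (Fin m → Fin m → Prop) :=
    {p : Fin m → Fin m → Prop | ∃ x : EuclideanSpace ℝ (Fin d),
        (∀ i j : Fin m, i ≠ j → ‖x - c i‖ ≠ ‖x - c j‖) ∧
        (∀ i j : Fin m, p i j ↔ ‖x - c i‖ < ‖x - c j‖)} with hP
  -- tie-free predicate and trace map
  set TF : EuclideanSpace ℝ (Fin d) → Prop := fun x => ∀ i j : Fin m, i ≠ j → ‖x - c i‖ ≠ ‖x - c j‖ with hTF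
  set trace : EuclideanSpace ℝ (Fin d) → Finset (Fin m × Fin m) :=
    fun x => Finset.univ.filter (fun q => ‖x - c q.1‖ < ‖x - c q.2‖) with htrace
  set 𝒜 : Finset (Finset (Fin m × Fin m)) :=
    Finset.univ.filter (fun S => ∃ x : EuclideanSpace ℝ (Fin d), TF x ∧ trace x = S) with h𝒜
  -- the encoding of patterns as finsets of ordered pairs
  set φ : (Fin m → Fin m → Prop) → Finset (Fin m × Fin m) :=
    fun p => Finset.univ.filter (fun q => p q.1 q.2) with hφdef
  have hφinj : Function.Injective φ := by
    intro p q hpq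
    funext i j
    have : (i, j) ∈ φ p ↔ (i, j) ∈ φ q := by rw [hpq]
    simp only [hφdef, Finset.mem_filter, Finset.mem_univ, true_and] at this
    exact propext this
  have himg : φ '' P ⊆ ↑𝒜 := by
    rintro S ⟨p, ⟨x, hx1, hx2⟩, rfl⟩
    simp only [h𝒜, Finset.coe_filter, Set.mem_setOf_eq, Finset.mem_univ, true_and]
    refine ⟨x, hx1, ?_⟩
    ext q
    simp only [htrace, hφdef, Finset.mem_filter, Finset.mem_univ, true_and]
    exact (hx2 q.1 q.2).symm
  -- every element of a trace is off-diagonal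
  have htrace_offdiag : ∀ x : EuclideanSpace ℝ (Fin d), ∀ q ∈ trace x, q.1 ≠ q.2 := by
    intro x q hq
    simp only [htrace, Finset.mem_filter] at hq
    intro h
    rw [h] at hq
    exact lt_irrefl _ hq.2
  -- key geometric fact: comparison as sign of affine function
  have hg : ∀ (x : EuclideanSpace ℝ (Fin d)) (i j : Fin m),
      ‖x - c j‖ ^ 2 - ‖x - c i‖ ^ 2
        = 2 * inner ℝ x (c i - c j) + (‖c j‖ ^ 2 - ‖c i‖ ^ 2) := by
    intro x i j
    rw [norm_sub_sq_real, norm_sub_sq_real, inner_sub_right]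
    ring
  have hlt_iff : ∀ (x : EuclideanSpace ℝ (Fin d)) (i j : Fin m),
      ‖x - c i‖ < ‖x - c j‖ ↔ 0 < ‖x - c j‖ ^ 2 - ‖x - c i‖ ^ 2 := by
    intro x i j
    rw [sub_pos]
    exact (pow_lt_pow_iff_left₀ (norm_nonneg _) (norm_nonneg _) (two_ne_zero)).symm
  -- VC dimension bound: every shattered set has cardinality at most d
  have hVC : ∀ s ∈ 𝒜.shatterer, s.card ≤ d := by
    intro s hs
    rw [Finset.mem_shatterer] at hs
    by_contra hbig
    push_neg at hbig
    obtain ⟨s', hs'sub, hs'card⟩ := Finset.exists_subset_card_eq (show d + 1 ≤ s.card from hbig)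
    have hshat : 𝒜.Shatters s' := hs.mono_right hs'sub
    -- every element of s' is off-diagonal
    have hoff : ∀ q ∈ s', q.1 ≠ q.2 := by
      obtain ⟨u, hu𝒜, hu⟩ := hshat.exists_superset
      simp only [h𝒜, Finset.mem_filter, Finset.mem_univ, true_and] at hu𝒜
      obtain ⟨x, _, rfl⟩ := hu𝒜
      exact fun q hq => htrace_offdiag x q (hu hq)
    -- enumerate s'
    set e : Fin (d + 1) → Fin m × Fin m :=
      fun t => (s'.equivFin.symm (Fin.cast hs'card.symm t) : Fin m × Fin m) with he
    have heinj : Function.Injective e := by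
      intro t₁ t₂ h
      have := Subtype.coe_injective h
      have := s'.equivFin.symm.injective this
      simpa [Fin.ext_iff] using congrArg Fin.val this
    have hemem : ∀ t, e t ∈ s' := fun t => (s'.equivFin.symm _).2
    -- the difference vectors
    set u : Fin (d + 1) → EuclideanSpace ℝ (Fin d) := fun t => c (e t).1 - c (e t).2 with hu
    set b : Fin (d + 1) → ℝ := fun t => ‖c (e t).2‖ ^ 2 - ‖c (e t).1‖ ^ 2 with hb
    -- linear dependence
    have hdep : ¬ LinearIndependent ℝ u := by
      intro hli
      have h1 := hli.fintype_card_le_finrank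
      rw [finrank_euclideanSpace_fin] at h1
      simp at h1
    rw [Fintype.not_linearIndependent_iff] at hdep
    obtain ⟨a, ha0, t₀, ht₀⟩ := hdep
    -- key contradiction, applied to a and -a
    have key : ∀ a' : Fin (d + 1) → ℝ, (∑ t, a' t • u t = 0) → (∃ t, a' t ≠ 0) →
        ¬ (∑ t, a' t * b t ≤ 0) := by
      intro a' ha'0 ⟨t₁, ht₁⟩ hB
      -- the subset to realize
      set U : Finset (Fin m × Fin m) :=
        (Finset.univ.filter (fun t => 0 < a' t)).image e with hU
      have hUsub : U ⊆ s' := by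
        intro q hq
        simp only [hU, Finset.mem_image] at hq
        obtain ⟨t, _, rfl⟩ := hq
        exact hemem t
      obtain ⟨S, hS𝒜, hSU⟩ := hshat hUsub
      simp only [h𝒜, Finset.mem_filter, Finset.mem_univ, true_and] at hS𝒜
      obtain ⟨x, hxTF, rfl⟩ := hS𝒜
      -- membership characterization
      have hmem : ∀ t, (e t ∈ trace x ↔ 0 < a' t) := by
        intro t
        have h1 : e t ∈ s' ∩ trace x ↔ e t ∈ U := by rw [hSU]
        have h2 : e t ∈ U ↔ 0 < a' t := by
          simp only [hU, Finset.mem_image, Finset.mem_filter, Finset.mem_univ, true_and]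
          constructor
          · rintro ⟨t', ht', hee⟩; rwa [← heinj hee]
          · intro h; exact ⟨t, h, rfl⟩
        rw [← h2, ← h1, Finset.mem_inter]
        simp [hemem t]
      -- each term of the sum is nonneg, and positive if a' t ≠ 0
      set g : Fin (d + 1) → ℝ :=
        fun t => ‖x - c (e t).2‖ ^ 2 - ‖x - c (e t).1‖ ^ 2 with hgdef
      have hterm : ∀ t, a' t ≠ 0 → 0 < a' t * g t := by
        intro t ht
        rcases lt_trichotomy (a' t) 0 with hneg | hzero | hpos
        · have hnot : ¬ (e t ∈ trace x) := by rw [hmem t]; exact fun h => absurd hneg (asymm h)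
          simp only [htrace, Finset.mem_filter, Finset.mem_univ, true_and] at hnot
          push_neg at hnot
          have hne := hxTF (e t).1 (e t).2 (hoff (e t) (hemem t))
          have hlt : ‖x - c (e t).2‖ < ‖x - c (e t).1‖ := lt_of_le_of_ne hnot (Ne.symm hne)
          have : g t < 0 := by
            simp only [hgdef]
            have := (hlt_iff x (e t).2 (e t).1).mp hlt
            linarith
          exact mul_pos_of_neg_of_neg hneg this
        · exact absurd hzero ht
        · have hin : e t ∈ trace x := (hmem t).mpr hpos
          simp only [htrace, Finset.mem_filter, Finset.mem_univ, true_and] at hin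
          have : 0 < g t := by simp only [hgdef]; exact (hlt_iff x (e t).1 (e t).2).mp hin
          exact mul_pos hpos this
      have hsumpos : 0 < ∑ t, a' t * g t := by
        apply Finset.sum_pos'
        · intro t _
          rcases eq_or_ne (a' t) 0 with h | h
          · simp [h]
          · exact le_of_lt (hterm t h)
        · exact ⟨t₁, Finset.mem_univ t₁, hterm t₁ ht₁⟩
      -- but the sum is the constant ∑ a' t * b t ≤ 0
      have hsumeq : ∑ t, a' t * g t = ∑ t, a' t * b t := by
        have h1 : ∀ t, a' t * g t = 2 * (a' t * inner ℝ x (u t)) + a' t * b t := by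
          intro t
          simp only [hgdef, hu, hb]
          rw [hg x (e t).1 (e t).2]
          ring
        calc ∑ t, a' t * g t = ∑ t, (2 * (a' t * inner ℝ x (u t)) + a' t * b t) := by
              exact Finset.sum_congr rfl fun t _ => h1 t
          _ = 2 * (inner ℝ x (∑ t, a' t • u t) : ℝ) + ∑ t, a' t * b t := by
              rw [inner_sum]
              simp_rw [real_inner_smul_right]
              rw [Finset.mul_sum, Finset.sum_add_distrib]
          _ = ∑ t, a' t * b t := by rw [ha'0, inner_zero_right]; ring
      rw [hsumeq] at hsumpos
      linarith
    rcases le_or_gt (∑ t, a t * b t) 0 with hB | hB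
    · exact key a ha0 ⟨t₀, ht₀⟩ hB
    · refine key (-a) ?_ ⟨t₀, by simpa using ht₀⟩ ?_
      · simp only [Pi.neg_apply, neg_smul, Finset.sum_neg_distrib, ha0, neg_zero]
      · simp only [Pi.neg_apply, neg_mul, Finset.sum_neg_distrib]
        linarith
  -- shattered sets consist of off-diagonal pairs
  have hVCoff : ∀ s ∈ 𝒜.shatterer, s ⊆ Finset.univ.offDiag := by
    intro s hs
    rw [Finset.mem_shatterer] at hs
    obtain ⟨u, hu𝒜, hsu⟩ := hs.exists_superset
    simp only [h𝒜, Finset.mem_filter, Finset.mem_univ, true_and] at hu𝒜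
    obtain ⟨x, _, rfl⟩ := hu𝒜
    intro q hq
    rw [Finset.mem_offDiag]
    exact ⟨Finset.mem_univ _, Finset.mem_univ _, htrace_offdiag x q (hsu hq)⟩
  -- counting
  have hn : (Finset.univ.offDiag : Finset ((Fin m × Fin m))).card = m * (m - 1) := by
    rw [Finset.offDiag_card]
    simp only [Finset.card_univ, Fintype.card_fin]
    obtain ⟨k, rfl⟩ : ∃ k, m = k + 1 := ⟨m - 1, by omega⟩
    rw [Nat.add_sub_cancel, Nat.mul_succ, Nat.add_sub_cancel]
  have hcard : 𝒜.card ≤ (d + 1) * (m * (m - 1)) ^ d := by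
    calc 𝒜.card ≤ 𝒜.shatterer.card := Finset.card_le_card_shatterer 𝒜
      _ ≤ ((Finset.range (d + 1)).biUnion
            (fun k => Finset.powersetCard k (Finset.univ.offDiag))).card := by
          apply Finset.card_le_card
          intro s hs
          rw [Finset.mem_biUnion]
          exact ⟨s.card, Finset.mem_range.mpr (Nat.lt_succ_of_le (hVC s hs)),
            (Finset.mem_powersetCard).mpr ⟨hVCoff s hs, rfl⟩⟩
      _ ≤ ∑ k ∈ Finset.range (d + 1), (Finset.powersetCard k (Finset.univ.offDiag)).card :=
          Finset.card_biUnion_le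
      _ ≤ ∑ _k ∈ Finset.range (d + 1), (m * (m - 1)) ^ d := by
          apply Finset.sum_le_sum
          intro k hk
          rw [Finset.card_powersetCard, hn]
          calc (m * (m - 1)).choose k ≤ (m * (m - 1)) ^ k := Nat.choose_le_pow _ _
            _ ≤ (m * (m - 1)) ^ d := by
                apply Nat.pow_le_pow_right
                · have : 1 ≤ m - 1 := by omega
                  calc 1 ≤ 2 * 1 := by norm_num
                    _ ≤ m * (m - 1) := Nat.mul_le_mul hm this
                · exact Nat.lt_succ_iff.mp (Finset.mem_range.mp hk)
      _ = (d + 1) * (m * (m - 1)) ^ d := by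
          rw [Finset.sum_const, Finset.card_range, smul_eq_mul]
  -- conclude
  have hPfin : P.Finite := by
    have : (φ '' P).Finite := 𝒜.finite_toSet.subset himg
    exact Set.Finite.of_finite_image this (hφinj.injOn)
  refine ⟨hPfin, ?_⟩
  calc P.ncard = (φ '' P).ncard := (Set.ncard_image_of_injective P hφinj).symm
    _ ≤ (↑𝒜 : Set (Finset (Fin m × Fin m))).ncard :=
        Set.ncard_le_ncard himg 𝒜.finite_toSet
    _ = 𝒜.card := by rw [Set.ncard_coe_finset]
    _ ≤ (d + 1) * (m * (m - 1)) ^ d := hcard
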